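/- For m ∈ {0,1} and all i ≥ 0, L*_{2i+m}(1, -q, 1/q) · q^{2i² - i + 2mi} = L*_{2i+m}(1, -1, q²). -/

import Mathlib

open Finset
noncomputable section
abbrev K : Type := RatFunc ℚ
def q : K := RatFunc.X
def qint (a : K) (m : ℕ) : K := ∑ i ∈ range m, a ^ i
def qfact (a : K) (m : ℕ) : K := ∏ i ∈ range m, qint a (i + 1)
def qbinom (a : K) (n k : ℕ) : K :=
  if k ≤ n then qfact a n / (qfact a k * qfact a (n - k)) else 0

lemma hq : q ≠ 0 := RatFunc.X_ne_zero

lemma q_pow_ne_one {m : ℕ} (hm : 1 ≤ m) : q ^ m ≠ 1 := by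
  intro h
  have : (Polynomial.X : Polynomial ℚ) ^ m = 1 := by
    apply RatFunc.algebraMap_injective ℚ
    simpa [q, RatFunc.algebraMap_X, map_pow] using h
  have := congrArg Polynomial.natDegree this
  simp [Polynomial.natDegree_X_pow] at this
  omega

lemma qint_ne_zero_of {a : K} {m : ℕ} (h : a ^ m ≠ 1) : qint a m ≠ 0 := by
  intro h0
  apply h
  have := geom_sum_mul a m
  rw [qint] at h0
  rw [h0, zero_mul] at this
  have : a ^ m - 1 = 0 := this.symm
  linear_combination this

lemma ha_inv : ∀ m : ℕ, 1 ≤ m → qint (1/q) m ≠ 0 := by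
  intro m hm
  apply qint_ne_zero_of
  rw [one_div, inv_pow]
  simp only [ne_eq, inv_eq_one]
  exact q_pow_ne_one hm

lemma ha_sq : ∀ m : ℕ, 1 ≤ m → qint (q^2) m ≠ 0 := by
  intro m hm
  apply qint_ne_zero_of
  rw [← pow_mul]
  exact q_pow_ne_one (by omega)

section General
variable {a : K}

lemma qfact_ne_zero (ha : ∀ m : ℕ, 1 ≤ m → qint a m ≠ 0) (n : ℕ) : qfact a n ≠ 0 :=
  Finset.prod_ne_zero_iff.2 fun i _ => ha (i+1) (by omega)

lemma qfact_succ (n : ℕ) : qfact a (n+1) = qfact a n * qint a (n+1) :=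
  Finset.prod_range_succ _ n

lemma qint_add (p t : ℕ) : qint a (p + t) = qint a p + a ^ p * qint a t := by
  unfold qint
  rw [Finset.sum_range_add, Finset.mul_sum]
  congr 1
  exact Finset.sum_congr rfl fun i _ => by rw [pow_add]

lemma qbinom_zero (ha : ∀ m : ℕ, 1 ≤ m → qint a m ≠ 0) (n : ℕ) : qbinom a n 0 = 1 := by
  rw [qbinom, if_pos (Nat.zero_le n)]
  simp [qfact]
  exact qfact_ne_zero ha n

lemma qbinom_lt {n k : ℕ} (h : n < k) : qbinom a n k = 0 := by
  rw [qbinom, if_neg (by omega)]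

lemma qbinom_self (ha : ∀ m : ℕ, 1 ≤ m → qint a m ≠ 0) (n : ℕ) : qbinom a n n = 1 := by
  rw [qbinom, if_pos le_rfl, Nat.sub_self]
  simp [qfact]
  exact qfact_ne_zero ha n

lemma qbinom_eq {n k : ℕ} (h : k ≤ n) :
    qbinom a n k = qfact a n / (qfact a k * qfact a (n - k)) := if_pos h

-- Pascal 1 : C(M,k) = a^k C(M-1,k) + C(M-1,k-1), for 1 ≤ k ≤ M
lemma pascal₁ (ha : ∀ m : ℕ, 1 ≤ m → qint a m ≠ 0) {M k : ℕ} (hk : 1 ≤ k) (hkM : k ≤ M) :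
    qbinom a M k = a ^ k * qbinom a (M-1) k + qbinom a (M-1) (k-1) := by
  rcases eq_or_lt_of_le hkM with h | h
  · subst h
    rw [qbinom_self ha, qbinom_lt (by omega)]
    rw [qbinom_self ha]
    ring
  · obtain ⟨B, rfl⟩ : ∃ B, k = B + 1 := ⟨k - 1, by omega⟩
    obtain ⟨C, rfl⟩ : ∃ C, M = (B+1) + (C+1) := ⟨M - B - 2, by omega⟩
    have e1 : B + 1 + (C + 1) - 1 = B + C + 1 := by omega
    rw [e1, show B + 1 - 1 = B from rfl]
    rw [qbinom_eq (by omega), qbinom_eq (by omega), qbinom_eq (by omega)]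
    have e2 : B + 1 + (C + 1) - (B + 1) = C + 1 := by omega
    have e3 : B + C + 1 - (B + 1) = C := by omega
    have e4 : B + C + 1 - B = C + 1 := by omega
    rw [e2, e3, e4]
    have h5 : qfact a (B+1+(C+1)) = qfact a (B+C+1) * qint a (B+C+2) := by
      have : B+1+(C+1) = (B+C+1)+1 := by omega
      rw [this, qfact_succ]
    have h6 : qfact a (C+1) = qfact a C * qint a (C+1) := qfact_succ _
    have h7 : qfact a (B+1) = qfact a B * qint a (B+1) := qfact_succ _
    have hsplit : qint a (B+C+2) = qint a (B+1) + a^(B+1) * qint a (C+1) := by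
      have : B+C+2 = (B+1) + (C+1) := by omega
      rw [this, qint_add]
    rw [h5, h6, h7, hsplit]
    have n1 := qfact_ne_zero ha (B+C+1)
    have n2 := qfact_ne_zero ha B
    have n3 := qfact_ne_zero ha C
    have n4 := ha (B+1) (by omega)
    have n5 := ha (C+1) (by omega)
    field_simp
    ring

-- Pascal 2 : C(M,k) = C(M-1,k) + a^(M-k) C(M-1,k-1), for 1 ≤ k ≤ M
lemma pascal₂ (ha : ∀ m : ℕ, 1 ≤ m → qint a m ≠ 0) {M k : ℕ} (hk : 1 ≤ k) (hkM : k ≤ M) :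
    qbinom a M k = qbinom a (M-1) k + a ^ (M - k) * qbinom a (M-1) (k-1) := by
  rcases eq_or_lt_of_le hkM with h | h
  · subst h
    rw [qbinom_self ha, qbinom_lt (by omega), Nat.sub_self]
    rw [qbinom_self ha]
    ring
  · obtain ⟨B, rfl⟩ : ∃ B, k = B + 1 := ⟨k - 1, by omega⟩
    obtain ⟨C, rfl⟩ : ∃ C, M = (B+1) + (C+1) := ⟨M - B - 2, by omega⟩
    have e1 : B + 1 + (C + 1) - 1 = B + C + 1 := by omega
    have e0 : B + 1 + (C + 1) - (B+1) = C + 1 := by omega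
    rw [e1, e0, show B + 1 - 1 = B from rfl]
    rw [qbinom_eq (by omega), qbinom_eq (by omega), qbinom_eq (by omega)]
    have e3 : B + C + 1 - (B + 1) = C := by omega
    have e4 : B + C + 1 - B = C + 1 := by omega
    rw [e0, e3, e4]
    have h5 : qfact a (B+1+(C+1)) = qfact a (B+C+1) * qint a (B+C+2) := by
      have : B+1+(C+1) = (B+C+1)+1 := by omega
      rw [this, qfact_succ]
    have h6 : qfact a (C+1) = qfact a C * qint a (C+1) := qfact_succ _
    have h7 : qfact a (B+1) = qfact a B * qint a (B+1) := qfact_succ _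
    have hsplit : qint a (B+C+2) = qint a (C+1) + a^(C+1) * qint a (B+1) := by
      have : B+C+2 = (C+1) + (B+1) := by omega
      rw [this, qint_add]
    rw [h5, h6, h7, hsplit]
    have n1 := qfact_ne_zero ha (B+C+1)
    have n2 := qfact_ne_zero ha B
    have n3 := qfact_ne_zero ha C
    have n4 := ha (B+1) (by omega)
    have n5 := ha (C+1) (by omega)
    field_simp

-- [k] C(M,k) = [M] C(M-1,k-1), for 1 ≤ k ≤ M
lemma qbinom_absorb (ha : ∀ m : ℕ, 1 ≤ m → qint a m ≠ 0) {M k : ℕ} (hk : 1 ≤ k) (hkM : k ≤ M) :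
    qint a k * qbinom a M k = qint a M * qbinom a (M-1) (k-1) := by
  obtain ⟨B, rfl⟩ : ∃ B, k = B + 1 := ⟨k - 1, by omega⟩
  obtain ⟨C, rfl⟩ : ∃ C, M = (B+1) + C := ⟨M - B - 1, by omega⟩
  have e1 : B + 1 + C - 1 = B + C := by omega
  have e2 : B + 1 + C - (B + 1) = C := by omega
  have e3 : B + C - B = C := by omega
  rw [e1, show B + 1 - 1 = B from rfl, qbinom_eq (by omega), qbinom_eq (by omega), e2, e3]
  have h5 : qfact a (B+1+C) = qfact a (B+C) * qint a (B+C+1) := by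
    have : B+1+C = (B+C)+1 := by omega
    rw [this, qfact_succ]
  have h7 : qfact a (B+1) = qfact a B * qint a (B+1) := qfact_succ _
  rw [h5, h7]
  have n1 := qfact_ne_zero ha (B+C)
  have n2 := qfact_ne_zero ha B
  have n3 := qfact_ne_zero ha C
  have n4 := ha (B+1) (by omega)
  have n5 := ha (B+C+1) (by omega)
  have hM : qint a (B+1+C) = qint a (B+C+1) := by rw [show B+1+C = B+C+1 by omega]
  rw [hM]
  field_simp
end General

def qF (a x s : K) : ℕ → K
  | 0 => 0
  | n + 1 => ∑ k ∈ range (n / 2 + 1),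
      a ^ (k * (k + 1) / 2) * qbinom a (n - k) k * s ^ k * x ^ (n - 2 * k)

section Rec
variable {a : K}

lemma htri (j : ℕ) : (j+1) * (j+2) / 2 = j * (j+1) / 2 + (j+1) := by
  rw [show (j+1)*(j+2) = j*(j+1) + (j+1)*2 by ring, Nat.add_mul_div_right _ _ (by norm_num)]

lemma qF_sum (a x s : K) (n m : ℕ) (hm : n/2 + 1 ≤ m) :
    qF a x s (n+1) = ∑ k ∈ range m,
      a ^ (k * (k + 1) / 2) * qbinom a (n - k) k * s ^ k * x ^ (n - 2 * k) := by
  show (∑ k ∈ range (n/2+1), _) = _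
  apply Finset.sum_subset (Finset.range_subset_range.2 hm)
  intro k hk hk'
  simp only [Finset.mem_range] at hk hk'
  rw [qbinom_lt (by omega)]
  ring

-- R1: qF a 1 s (n+3) = qF a 1 (a*s) (n+2) + a * s * qF a 1 (a*s) (n+1)
lemma R1 (ha : ∀ m : ℕ, 1 ≤ m → qint a m ≠ 0) (s : K) (n : ℕ) :
    qF a 1 s (n+3) = qF a 1 (a*s) (n+2) + a * s * qF a 1 (a*s) (n+1) := by
  rw [qF_sum a 1 s (n+2) ((n+2)/2+1) le_rfl,
      qF_sum a 1 (a*s) (n+1) ((n+2)/2+1) (by omega),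
      qF_sum a 1 (a*s) n ((n+2)/2) (by omega)]
  rw [Finset.sum_range_succ' _ ((n+2)/2), Finset.sum_range_succ' _ ((n+2)/2)]
  simp only [one_pow, pow_zero, mul_one, Nat.sub_zero, Nat.zero_mul, Nat.mul_one]
  rw [qbinom_zero ha, qbinom_zero ha, Finset.mul_sum, add_right_comm]
  congr 1
  rw [← Finset.sum_add_distrib]
  apply Finset.sum_congr rfl
  intro j hj
  simp only [Finset.mem_range] at hj
  have h2j : 2*j ≤ n := by omega
  have e1 : n + 2 - (j+1) = n + 1 - j := by omega
  have e2 : n + 1 - (j+1) = n - j := by omega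
  rw [e1, e2]
  rw [pascal₁ ha (show 1 ≤ j+1 by omega) (show j+1 ≤ n+1-j by omega)]
  have e3 : n + 1 - j - 1 = n - j := by omega
  have e4 : j + 1 - 1 = j := rfl
  rw [e3, e4, htri j, pow_add, mul_pow]
  ring

-- R2: qF a 1 s (n+3) = qF a 1 s (n+2) + s * a^(n+1) * qF a 1 (s/a) (n+1)
lemma R2 (ha : ∀ m : ℕ, 1 ≤ m → qint a m ≠ 0) (ha0 : a ≠ 0) (s : K) (n : ℕ) :
    qF a 1 s (n+3) = qF a 1 s (n+2) + s * a^(n+1) * qF a 1 (s/a) (n+1) := by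
  rw [qF_sum a 1 s (n+2) ((n+2)/2+1) le_rfl,
      qF_sum a 1 s (n+1) ((n+2)/2+1) (by omega),
      qF_sum a 1 (s/a) n ((n+2)/2) (by omega)]
  rw [Finset.sum_range_succ' _ ((n+2)/2), Finset.sum_range_succ' _ ((n+2)/2)]
  simp only [one_pow, pow_zero, mul_one, Nat.sub_zero, Nat.zero_mul, Nat.mul_one]
  rw [qbinom_zero ha, qbinom_zero ha, Finset.mul_sum, add_right_comm]
  congr 1
  rw [← Finset.sum_add_distrib]
  apply Finset.sum_congr rfl
  intro j hj
  simp only [Finset.mem_range] at hj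
  have h2j : 2*j ≤ n := by omega
  have e1 : n + 2 - (j+1) = n + 1 - j := by omega
  have e2 : n + 1 - (j+1) = n - j := by omega
  rw [e1, e2]
  rw [pascal₂ ha (show 1 ≤ j+1 by omega) (show j+1 ≤ n+1-j by omega)]
  have e3 : n + 1 - j - 1 = n - j := by omega
  have e4 : j + 1 - 1 = j := rfl
  have e5 : n + 1 - j - (j + 1) = n - 2*j := by omega
  rw [e3, e4, e5, htri j]
  have e6 : a ^ (n+1) = a ^ (n - 2*j) * a ^ (2*j+1) := by
    rw [← pow_add]; congr 1; omega
  rw [e6, pow_add, div_pow]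
  field_simp
  ring
end Rec

def qL (a x s : K) (n : ℕ) : K :=
  if n = 0 then 2 else
  ∑ k ∈ range (n / 2 + 1),
    a ^ (k * (k - 1) / 2) * (qint a n / qint a (n - k)) * qbinom a (n - k) k
      * s ^ k * x ^ (n - 2 * k)

section Rec2
variable {a : K}

lemma Mrec (ha : ∀ m : ℕ, 1 ≤ m → qint a m ≠ 0) (ha0 : a ≠ 0) (s : K) (n : ℕ) :
    qF a 1 s (n+5) = qF a 1 s (n+4)
      + s * a^(n+3) * (qF a 1 s (n+2) + s * qF a 1 s (n+1)) := by
  have h1 := R2 ha ha0 s (n+2)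
  have h2 := R1 ha (s/a) n
  have hs : a * (s/a) = s := by field_simp
  rw [hs] at h2
  rw [show n+2+3 = n+5 from rfl, show n+2+2 = n+4 from rfl, show n+2+1 = n+3 from rfl] at h1
  rw [h1, h2]

lemma LD (ha : ∀ m : ℕ, 1 ≤ m → qint a m ≠ 0) (ha0 : a ≠ 0) (s : K) (n : ℕ) :
    qL a 1 s (n+1) = qF a 1 (s/a) (n+2) + s * a^n * qF a 1 (s/a) n := by
  cases n with
  | zero =>
    rw [qL, if_neg (by omega), show qF a 1 (s/a) 0 = 0 from rfl,
        qF_sum a 1 (s/a) 1 1 (by norm_num)]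
    norm_num [Finset.sum_range_one, qbinom_zero ha, qint]
  | succ n' =>
    rw [qL, if_neg (by omega)]
    rw [qF_sum a 1 (s/a) (n'+2) ((n'+1+1)/2+1) (by omega),
        qF_sum a 1 (s/a) n' ((n'+1+1)/2) (by omega)]
    rw [Finset.sum_range_succ' _ ((n'+1+1)/2), Finset.sum_range_succ' _ ((n'+1+1)/2),
        Finset.mul_sum]
    simp only [one_pow, pow_zero, mul_one, Nat.sub_zero, Nat.zero_mul, Nat.zero_div,
      one_mul, Nat.mul_one]
    simp only [qbinom_zero ha]
    rw [div_self (ha (n'+1+1) (by omega))]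
    have hsum : (∑ x ∈ Finset.range ((n' + 1 + 1) / 2),
        a ^ ((x + 1) * (x + 1 - 1) / 2) * (qint a (n' + 1 + 1) / qint a (n' + 1 + 1 - (x + 1))) *
            qbinom a (n' + 1 + 1 - (x + 1)) (x + 1) * s ^ (x + 1))
        = (∑ x ∈ Finset.range ((n' + 1 + 1) / 2),
          a ^ ((x + 1) * (x + 1 + 1) / 2) * qbinom a (n' + 2 - (x + 1)) (x + 1) * (s / a) ^ (x + 1))
        + ∑ x ∈ Finset.range ((n' + 1 + 1) / 2),
          s * a ^ (n' + 1) * (a ^ (x * (x + 1) / 2) * qbinom a (n' - x) x * (s / a) ^ x) := by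
      rw [← Finset.sum_add_distrib]
      apply Finset.sum_congr rfl
      intro j hj
      simp only [Finset.mem_range] at hj
      have h2j : 2*j ≤ n' := by omega
      have e1 : n' + 1 + 1 - (j+1) = n' + 1 - j := by omega
      have e2 : n' + 2 - (j+1) = n' + 1 - j := by omega
      rw [e1]
      have hM1 : 1 ≤ n' + 1 - j := by omega
      have hMne := ha _ hM1
      have habs := qbinom_absorb ha (show 1 ≤ j+1 by omega) (show j+1 ≤ n'+1-j by omega)
      rw [show (j+1)-1 = j from rfl] at habs
      have e3 : n' + 1 - j - 1 = n' - j := by omega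
      rw [e3] at habs
      have key : qint a (n'+1+1) / qint a (n'+1-j) * qbinom a (n'+1-j) (j+1)
          = qbinom a (n'+1-j) (j+1) + a^(n'+1-j) * qbinom a (n'-j) j := by
        rw [show n'+1+1 = (n'+1-j) + (j+1) by omega, qint_add]
        rw [div_mul_eq_mul_div, div_eq_iff hMne]
        linear_combination a^(n'+1-j) * habs
      rw [mul_assoc (a ^ ((j+1)*(j+1-1)/2)), key]
      rw [show (j+1)*(j+1-1)/2 = j*(j+1)/2 from by rw [show j+1-1 = j from rfl]; ring_nf]
      rw [htri j]
      have e6 : a ^ (n'+1) = a ^ (n'+1-j) * a ^ j := by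
        rw [← pow_add]; congr 1; omega
      rw [e6, pow_add, div_pow, div_pow]
      field_simp
      ring
    rw [hsum]
    ring
end Rec2

def qLs (a x s : K) (n : ℕ) : K := if n = 0 then 1 else qL a x s n

section Small
variable {a : K}

lemma qF1 (ha : ∀ m : ℕ, 1 ≤ m → qint a m ≠ 0) (s : K) : qF a 1 s 1 = 1 := by
  show qF a 1 s (0+1) = 1
  rw [qF_sum a 1 s 0 1 (by norm_num)]
  norm_num [Finset.sum_range_one, qbinom_zero ha]

lemma qF2 (ha : ∀ m : ℕ, 1 ≤ m → qint a m ≠ 0) (s : K) : qF a 1 s 2 = 1 := by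
  show qF a 1 s (1+1) = 1
  rw [qF_sum a 1 s 1 1 (by norm_num)]
  norm_num [Finset.sum_range_one, qbinom_zero ha]

lemma qbinom21 (ha : ∀ m : ℕ, 1 ≤ m → qint a m ≠ 0) : qbinom a 2 1 = 1 + a := by
  rw [qbinom_eq (by norm_num)]
  have h1 : qfact a 1 = 1 := by simp [qfact, qint]
  have h2 : qfact a 2 = 1 + a := by
    simp [qfact, qint, Finset.prod_range_succ, Finset.sum_range_succ]
  norm_num [h1, h2]

lemma qF3 (ha : ∀ m : ℕ, 1 ≤ m → qint a m ≠ 0) (s : K) : qF a 1 s 3 = 1 + a * s := by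
  show qF a 1 s (2+1) = 1 + a * s
  rw [qF_sum a 1 s 2 2 (by norm_num)]
  rw [Finset.sum_range_succ, Finset.sum_range_one,
     show (2:ℕ) - 1 = 1 from rfl, show (2:ℕ) - 0 = 2 from rfl,
     qbinom_zero ha, qbinom_self ha]
  norm_num

lemma qF4 (ha : ∀ m : ℕ, 1 ≤ m → qint a m ≠ 0) (s : K) : qF a 1 s 4 = 1 + a * (1+a) * s := by
  show qF a 1 s (3+1) = 1 + a * (1+a) * s
  rw [qF_sum a 1 s 3 2 (by norm_num)]
  rw [Finset.sum_range_succ, Finset.sum_range_one,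
     show (3:ℕ) - 1 = 2 from rfl, show (3:ℕ) - 0 = 3 from rfl,
     qbinom_zero ha, qbinom21 ha]
  norm_num
end Small

def U (r : ℕ) : ℕ := r * (r - 1) / 2

lemma hU (r : ℕ) : U (r+1) = U r + r := by
  unfold U
  cases r with
  | zero => rfl
  | succ p =>
    rw [show (p+1+1)*(p+1+1-1) = (p+1)*(p+1-1) + 2*(p+1) by simp; ring]
    rw [Nat.add_mul_div_left _ _ (by norm_num)]

lemma hU2 (r : ℕ) : 2 * U r = r * (r - 1) := by
  unfold U
  cases r with
  | zero => rfl
  | succ p =>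
    rw [show p+1-1 = p from rfl]
    have h : 2 ∣ (p+1)*p := by
      rw [Nat.mul_comm]
      exact (Nat.even_mul_succ_self p).two_dvd
    exact Nat.mul_div_cancel' h

def Fh (n : ℕ) : K := qF (1/q) 1 (-q^2) n
def Gg (n : ℕ) : K := qF (q^2) 1 (-(1/q^2)) n
def f1 (r : ℕ) : K := (-1)^r * q^((r : ℤ) - 3*(U r : ℤ))
def f2 (r : ℕ) : K := (-1)^r * q^(-3*(U r : ℤ) - r)
def f3 (r : ℕ) : K := (-1)^r * (q^(-3*(U r : ℤ) - 2*r) - q^(-3*(U r : ℤ) - r + 1))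
def g1 (r : ℕ) : K := (-1)^r * q^(6*(U r : ℤ) + 2*r)
def g2 (r : ℕ) : K := (-1)^r * q^(6*(U r : ℤ) + 4*r)

lemma hq10 : (1/q : K) ≠ 0 := one_div_ne_zero hq
lemma hqsq : (q^2 : K) ≠ 0 := pow_ne_zero _ hq

lemma hz1 (k : ℕ) : (-q^2) * (1/q)^k = -q^(2 - (k:ℤ)) := by
  rw [one_div, inv_pow, ← zpow_natCast q k, ← zpow_neg, ← zpow_natCast q 2,
    neg_mul, ← zpow_add₀ hq]
  congr 2
  all_goals push_cast
  all_goals ring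

lemma hs1 : (-q^2 : K) = -q^((2:ℤ)) := by
  rw [← zpow_natCast q 2]; norm_num

lemma hs2 : (-(1/q^2) : K) = -q^(-2 : ℤ) := by
  rw [one_div, ← zpow_natCast q 2, ← zpow_neg]; norm_num

lemma hz2 (k : ℕ) : (-(1/q^2)) * (q^2)^k = -q^(2*(k:ℤ) - 2) := by
  rw [hs2, ← pow_mul, ← zpow_natCast q (2*k), neg_mul, ← zpow_add₀ hq]
  congr 2
  all_goals push_cast
  all_goals ring

lemma Gg_forms (r : ℕ) : Gg (3*r+1) = g1 r ∧ Gg (3*r+2) = g2 r ∧ Gg (3*r+3) = 0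
    ∧ Gg (3*r+4) = g1 (r+1) := by
  induction r with
  | zero =>
    simp only [Nat.mul_zero, Nat.zero_add]
    refine ⟨?_, ?_, ?_, ?_⟩
    · rw [show Gg 1 = qF (q^2) 1 (-(1/q^2)) 1 from rfl, qF1 ha_sq]
      simp [g1, U]
    · rw [show Gg 2 = qF (q^2) 1 (-(1/q^2)) 2 from rfl, qF2 ha_sq]
      simp [g2, U]
    · rw [show Gg 3 = qF (q^2) 1 (-(1/q^2)) 3 from rfl, qF3 ha_sq]
      rw [mul_neg, mul_one_div, div_self hqsq]
      ring
    · rw [show Gg 4 = qF (q^2) 1 (-(1/q^2)) 4 from rfl, qF4 ha_sq]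
      rw [show g1 1 = -q^((2:ℕ):ℤ) by simp [g1, U], zpow_natCast]
      field_simp [hq]
      ring
  | succ p ih =>
    obtain ⟨hA, hB, hC, hA'⟩ := ih
    simp only [Gg] at hA hB hC hA' ⊢
    have step1 : qF (q^2) 1 (-(1/q^2)) (3*p+5) = g2 (p+1) := by
      have hM := Mrec ha_sq hqsq (-(1/q^2)) (3*p)
      rw [hM, hA', hB, hA, hz2, hs2]
      simp only [g1, g2, hU]
      push_cast
      ring_nf
      simp only [← zpow_add₀ hq]
      ring_nf
    have step2 : qF (q^2) 1 (-(1/q^2)) (3*p+6) = 0 := by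
      have hM := Mrec ha_sq hqsq (-(1/q^2)) (3*p+1)
      rw [show 3*p+1+5 = 3*p+6 by omega, show 3*p+1+4 = 3*p+5 by omega,
          show 3*p+1+2 = 3*p+3 by omega, show 3*p+1+1 = 3*p+2 by omega] at hM
      rw [hM, step1, hC, hB, hz2, hs2]
      simp only [g1, g2, hU]
      push_cast
      ring_nf
      simp only [← zpow_add₀ hq]
      ring_nf
    have step3 : qF (q^2) 1 (-(1/q^2)) (3*p+7) = g1 (p+2) := by
      have hM := Mrec ha_sq hqsq (-(1/q^2)) (3*p+2)
      rw [show 3*p+2+5 = 3*p+7 by omega, show 3*p+2+4 = 3*p+6 by omega,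
          show 3*p+2+2 = 3*p+4 by omega, show 3*p+2+1 = 3*p+3 by omega] at hM
      rw [hM, step2, hA', hC, hz2, hs2]
      simp only [g1, g2, hU, show p+2 = (p+1)+1 from rfl]
      push_cast
      ring_nf
      simp only [← zpow_add₀ hq]
      ring_nf
    refine ⟨?_, ?_, ?_, ?_⟩
    · rw [show 3*(p+1)+1 = 3*p+4 by ring]; exact hA'
    · rw [show 3*(p+1)+2 = 3*p+5 by ring]; exact step1
    · rw [show 3*(p+1)+3 = 3*p+6 by ring]; exact step2
    · rw [show 3*(p+1)+4 = 3*p+7 by ring, show p+1+1 = p+2 from rfl]; exact step3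

lemma Fh_forms (r : ℕ) : Fh (3*r+1) = f1 r ∧ Fh (3*r+2) = f2 r ∧ Fh (3*r+3) = f3 r
    ∧ Fh (3*r+4) = f1 (r+1) := by
  induction r with
  | zero =>
    simp only [Nat.mul_zero, Nat.zero_add]
    refine ⟨?_, ?_, ?_, ?_⟩
    · rw [show Fh 1 = qF (1/q) 1 (-q^2) 1 from rfl, qF1 ha_inv]
      simp [f1, U]
    · rw [show Fh 2 = qF (1/q) 1 (-q^2) 2 from rfl, qF2 ha_inv]
      simp [f2, U]
    · rw [show Fh 3 = qF (1/q) 1 (-q^2) 3 from rfl, qF3 ha_inv]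
      simp only [f3, U, show (0:ℕ)*(0-1)/2 = 0 from rfl]
      push_cast
      field_simp [hq]
      ring
    · rw [show Fh 4 = qF (1/q) 1 (-q^2) 4 from rfl, qF4 ha_inv]
      simp only [f1, U, show (1:ℕ)*(1-1)/2 = 0 from rfl]
      push_cast
      field_simp [hq]
      ring
  | succ p ih =>
    obtain ⟨hA, hB, hC, hA'⟩ := ih
    simp only [Fh] at hA hB hC hA' ⊢
    have step1 : qF (1/q) 1 (-q^2) (3*p+5) = f2 (p+1) := by
      have hM := Mrec ha_inv hq10 (-q^2) (3*p)
      rw [hM, hA', hB, hA, hz1, hs1]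
      simp only [f1, f2, hU]
      push_cast
      ring_nf
      simp only [← zpow_add₀ hq]
      ring_nf
    have step2 : qF (1/q) 1 (-q^2) (3*p+6) = f3 (p+1) := by
      have hM := Mrec ha_inv hq10 (-q^2) (3*p+1)
      rw [show 3*p+1+5 = 3*p+6 by omega, show 3*p+1+4 = 3*p+5 by omega,
          show 3*p+1+2 = 3*p+3 by omega, show 3*p+1+1 = 3*p+2 by omega] at hM
      rw [hM, step1, hC, hB, hz1, hs1]
      simp only [f2, f3, hU]
      push_cast
      ring_nf
      simp only [← zpow_add₀ hq]
      ring_nf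
    have step3 : qF (1/q) 1 (-q^2) (3*p+7) = f1 (p+2) := by
      have hM := Mrec ha_inv hq10 (-q^2) (3*p+2)
      rw [show 3*p+2+5 = 3*p+7 by omega, show 3*p+2+4 = 3*p+6 by omega,
          show 3*p+2+2 = 3*p+4 by omega, show 3*p+2+1 = 3*p+3 by omega] at hM
      rw [hM, step2, hA', hC, hz1, hs1]
      simp only [f1, f3, hU, show p+2 = (p+1)+1 from rfl]
      push_cast
      ring_nf
      simp only [← zpow_add₀ hq]
      ring_nf
    refine ⟨?_, ?_, ?_, ?_⟩
    · rw [show 3*(p+1)+1 = 3*p+4 by ring]; exact hA'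
    · rw [show 3*(p+1)+2 = 3*p+5 by ring]; exact step1
    · rw [show 3*(p+1)+3 = 3*p+6 by ring]; exact step2
    · rw [show 3*(p+1)+4 = 3*p+7 by ring, show p+1+1 = p+2 from rfl]; exact step3

lemma exp1 (r : ℕ) : (3*r+1)*(3*r)/2 = 9*U r + 6*r := by
  have h : (3*r+1)*(3*r) = 2*(9*U r + 6*r) := by
    cases r with
    | zero => rfl
    | succ p =>
      have h2 : 2 * U (p+1) = (p+1)*p := hU2 (p+1)
      zify at h2 ⊢
      linear_combination -9 * h2
  rw [h, Nat.mul_div_cancel_left _ (by norm_num : 0 < 2)]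

lemma exp2 (r : ℕ) : (3*r+2)*(3*r+1)/2 = 9*U r + 9*r + 1 := by
  have h : (3*r+2)*(3*r+1) = 2*(9*U r + 9*r + 1) := by
    cases r with
    | zero => rfl
    | succ p =>
      have h2 : 2 * U (p+1) = (p+1)*p := hU2 (p+1)
      zify at h2 ⊢
      linear_combination -9 * h2
  rw [h, Nat.mul_div_cancel_left _ (by norm_num : 0 < 2)]

lemma exp3 (r : ℕ) : (3*r+3)*(3*r+2)/2 = 9*U r + 12*r + 3 := by
  have h : (3*r+3)*(3*r+2) = 2*(9*U r + 12*r + 3) := by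
    cases r with
    | zero => rfl
    | succ p =>
      have h2 : 2 * U (p+1) = (p+1)*p := hU2 (p+1)
      zify at h2 ⊢
      linear_combination -9 * h2
  rw [h, Nat.mul_div_cancel_left _ (by norm_num : 0 < 2)]

lemma hz3 (k : ℕ) : (-q) * (1/q)^k = -q^(1 - (k:ℤ)) := by
  rw [one_div, inv_pow, ← zpow_natCast q k, ← zpow_neg]
  rw [show (-q : K) = -q^(1:ℤ) by rw [zpow_one]]
  rw [neg_mul, ← zpow_add₀ hq]
  congr 2
  try omega

lemma hz4 (k : ℕ) : (-1 : K) * (q^2)^k = -q^(2*(k:ℤ)) := by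
  rw [← pow_mul, ← zpow_natCast q (2*k), neg_one_mul]
  push_cast
  ring

lemma main (n : ℕ) :
    qL (1/q) 1 (-q) (n+1) * q ^ ((n+1)*n/2) = qL (q^2) 1 (-1) (n+1) := by
  have h1 := LD ha_inv hq10 (-q) n
  have h2 := LD ha_sq hqsq (-1) n
  have e1 : (-q) / (1/q) = -q^2 := by
    field_simp
  have e2 : (-1 : K) / (q^2) = -(1/q^2) := by ring
  rw [e1] at h1
  rw [e2] at h2
  rw [h1, h2]
  obtain ⟨r, t, ht, rfl⟩ : ∃ r t, t < 3 ∧ n = 3*r + t := ⟨n/3, n%3, by omega, by omega⟩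
  have FF := Fh_forms r
  simp only [Fh] at FF
  obtain ⟨F1, F2, F3, F4⟩ := FF
  have GGf := Gg_forms r
  simp only [Gg] at GGf
  obtain ⟨G1, G2, G3, G4⟩ := GGf
  interval_cases t
  · -- n = 3r
    rw [show 3*r+0+2 = 3*r+2 by ring, show 3*r+0+1 = 3*r+1 by ring, show 3*r+0 = 3*r by ring]
    rw [exp1 r, F2, G2]
    rcases r with _ | p
    · rw [show (3:ℕ)*0 = 0 from rfl, show qF (1/q) 1 (-q^2) 0 = 0 from rfl,
        show qF (q^2) 1 (-(1/q^2)) 0 = 0 from rfl]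
      simp [f2, g2, U]
    · have F3p := (Fh_forms p).2.2.1
      have G3p := (Gg_forms p).2.2.1
      simp only [Fh] at F3p
      simp only [Gg] at G3p
      rw [show 3*(p+1) = 3*p+3 by ring, F3p, G3p, hz3, hz4]
      rw [← zpow_natCast q (9*U (p+1) + 6*(p+1))]
      simp only [f2, f3, g2, hU]
      push_cast
      ring_nf
      simp only [← zpow_add₀ hq]
      ring_nf
  · -- n = 3r+1
    rw [show 3*r+1+2 = 3*r+3 by ring, show 3*r+1+1 = 3*r+2 by ring]
    rw [show (3*r+2)*(3*r+1)/2 = 9*U r + 9*r + 1 from exp2 r, F3, G3, F1, G1, hz3, hz4]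
    rw [← zpow_natCast q (9*U r + 9*r + 1)]
    simp only [f1, f3, g1, hU]
    push_cast
    ring_nf
    simp only [← zpow_add₀ hq]
    ring_nf
  · -- n = 3r+2
    rw [show 3*r+2+2 = 3*r+4 by ring, show 3*r+2+1 = 3*r+3 by ring]
    rw [show (3*r+3)*(3*r+2)/2 = 9*U r + 12*r + 3 from exp3 r, F4, G4, F2, G2, hz3, hz4]
    rw [← zpow_natCast q (9*U r + 12*r + 3)]
    simp only [f1, f2, g1, g2, hU]
    push_cast
    ring_nf
    simp only [← zpow_add₀ hq]
    ring_nf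

/-- Rogers-Szegő polynomial. -/
def rs (a x y : K) (m : ℕ) : K := ∑ j ∈ range (m + 1), qbinom a m j * x ^ j * y ^ (m - j)

/-- q-Pochhammer (q;q)_m. -/
def qpoch (a : K) (m : ℕ) : K := ∏ j ∈ range m, (1 - a ^ (j + 1))


theorem stmt19 (m i : ℕ) (hm : m = 0 ∨ m = 1) :
    qLs (1 / q) 1 (-q) (2 * i + m) * q ^ (2 * i ^ 2 - i + 2 * m * i)
      = qLs (q ^ 2) 1 (-1) (2 * i + m) := by
  rcases hm with rfl | rfl
  · rcases i with _ | j
    · simp [qLs]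
    · rw [show 2*(j+1) + 0 = (2*j+1) + 1 by ring]
      simp only [qLs]
      rw [if_neg (by omega : ¬(2*j+1+1 = 0)), if_neg (by omega : ¬(2*j+1+1 = 0))]
      have eexp : 2*(j+1)^2 - (j+1) + 2*0*(j+1) = (2*j+1+1)*(2*j+1)/2 := by
        have e : (2*j+1+1)*(2*j+1) = 2*((j+1)*(2*j+1)) := by ring
        rw [e, Nat.mul_div_cancel_left _ (by norm_num : 0 < 2)]
        have hle : (j+1) ≤ 2*(j+1)^2 := by nlinarith
        zify [hle]
        ring
      rw [eexp]
      exact main (2*j+1)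
  · rw [show 2*i + 1 = (2*i) + 1 from rfl]
    simp only [qLs]
    rw [if_neg (by omega : ¬(2*i+1 = 0)), if_neg (by omega : ¬(2*i+1 = 0))]
    have eexp : 2*i^2 - i + 2*1*i = (2*i+1)*(2*i)/2 := by
      have e : (2*i+1)*(2*i) = 2*(i*(2*i+1)) := by ring
      rw [e, Nat.mul_div_cancel_left _ (by norm_num : 0 < 2)]
      have hle : i ≤ 2*i^2 := by nlinarith
      zify [hle]
      ring
    rw [eexp]
    exact main (2*i)
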